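/- The product DAG of a trimmed sequential variable-set automaton 𝒜 and a document d is a leveled mapping DAG: it is acyclic, on every path the labels of the marker edges are pairwise disjoint, every ε-edge increases the level (second component) by exactly 1, every marker edge preserves the level, and every pair (m,i) in a marker-edge label has i equal to the level of its endpoints; moreover its width is at most |Q|. -/

import Mathlib

namespace Spanners

/-- Variable markers: an open marker `⊢x` or a close marker `x⊣` for a variable `x`. -/
inductive Marker (V : Type) : Type where
  | openM : V → Marker V
  | closeM : V → Marker V
deriving DecidableEq

/-- A variable-set automaton (VA) over alphabet `Sig`, variables `V`, states `Q`. -/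
structure VA (Sig V Q : Type) : Type where
  init : Q
  final : Set Q
  letterTr : Q → Sig → Q → Prop
  varTr : Q → Marker V → Q → Prop

namespace VA

variable {Sig V Q : Type}

/-- `Run A d (q, i) L (q', i')` holds when there is a run of `A` on `d` from configuration
`(q, i)` to configuration `(q', i')` reading the list `L` of (marker, position) pairs,
in order. Letter transitions advance the position and must match the document letter;
variable transitions keep the position and read their marker at that position. -/
inductive Run (A : VA Sig V Q) (d : List Sig) :
    Q × ℕ → List (Marker V × ℕ) → Q × ℕ → Prop where
  | refl (c : Q × ℕ) : Run A d c [] c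
  | stepLetter {q : Q} {i : ℕ} {a : Sig} {q' : Q} {L : List (Marker V × ℕ)} {c : Q × ℕ} :
      A.letterTr q a q' → d[i]? = some a →
      Run A d (q', i + 1) L c → Run A d (q, i) L c
  | stepVar {q : Q} {i : ℕ} {m : Marker V} {q' : Q} {L : List (Marker V × ℕ)} {c : Q × ℕ} :
      A.varTr q m q' →
      Run A d (q', i) L c → Run A d (q, i) ((m, i) :: L) c

/-- An accepting run of `A` on `d`, reading the trace `L`: it goes from the initial
configuration `(q₀, 0)` to a configuration `(q_f, |d|)` with `q_f` final. -/
def Accepting (A : VA Sig V Q) (d : List Sig) (L : List (Marker V × ℕ)) : Prop :=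
  ∃ qf, qf ∈ A.final ∧ A.Run d (A.init, 0) L (qf, d.length)

/-- Validity of a trace: every variable marker is read at most once, and whenever
`⊢x` is read at position `i` then `x⊣` is read at some position `i' ≥ i`. -/
def ValidTrace (L : List (Marker V × ℕ)) : Prop :=
  (∀ (m : Marker V) (k k' : ℕ) (hk : k < L.length) (hk' : k' < L.length),
      (L.get ⟨k, hk⟩).1 = m → (L.get ⟨k', hk'⟩).1 = m → k = k') ∧
  (∀ (x : V) (i : ℕ), (Marker.openM x, i) ∈ L →
      ∃ i', i ≤ i' ∧ (Marker.closeM x, i') ∈ L)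

/-- A valid run: an accepting run whose trace is valid. -/
def Valid (A : VA Sig V Q) (d : List Sig) (L : List (Marker V × ℕ)) : Prop :=
  A.Accepting d L ∧ ValidTrace L

/-- The mapping defined by (the trace of) a valid run: the graph of the partial function
sending each variable `x` to the span `[i, i'⟩` such that `⊢x` is read at `i` and
`x⊣` is read at `i'`. -/
def traceMapping (L : List (Marker V × ℕ)) : Set (V × ℕ × ℕ) :=
  {p | (Marker.openM p.1, p.2.1) ∈ L ∧ (Marker.closeM p.1, p.2.2) ∈ L}

/-- The document spanner of a VA: to each document it assigns the set of mappings
of its valid runs. -/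
def spanner (A : VA Sig V Q) (d : List Sig) : Set (Set (V × ℕ × ℕ)) :=
  {m | ∃ L, A.Valid d L ∧ m = traceMapping L}

/-- A VA is sequential when, on every document, every accepting run is valid. -/
def Sequential (A : VA Sig V Q) : Prop :=
  ∀ (d : List Sig) (L : List (Marker V × ℕ)), A.Accepting d L → ValidTrace L

/-- Two VAs are equivalent when their document spanners agree on every document. -/
def Equivalent {Q' : Type} (A : VA Sig V Q) (B : VA Sig V Q') : Prop :=
  ∀ d : List Sig, A.spanner d = B.spanner d

/-- A VA is trimmed when every state appears in some accepting run on some document. -/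
def Trimmed (A : VA Sig V Q) : Prop :=
  ∀ q : Q, ∃ (d : List Sig) (i : ℕ) (L₁ L₂ : List (Marker V × ℕ)) (qf : Q),
    qf ∈ A.final ∧ A.Run d (A.init, 0) L₁ (q, i) ∧ A.Run d (q, i) L₂ (qf, d.length)

/-- The mappings of a VA on a document, each written as the set of pairs `(m, i)` of a
marker `m` read at position `i` in a valid run. -/
def mappings (A : VA Sig V Q) (d : List Sig) : Set (Set (Marker V × ℕ)) :=
  {T | ∃ L, A.Valid d L ∧ T = {p | p ∈ L}}

end VA

/-- A labeled leveled-style DAG structure used for mapping DAGs: vertices are pairs whose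
second component is a nonnegative integer (the level); each edge label is either `none`
(an ε-edge) or `some S` for a finite set `S` of (marker, position) pairs (a marker edge). -/
structure LMDAG (β M : Type) : Type where
  verts : Set (β × ℕ)
  init : β × ℕ
  final : β × ℕ
  edge : β × ℕ → Option (Finset (M × ℕ)) → β × ℕ → Prop

namespace LMDAG

variable {β M : Type}

/-- Paths in the DAG, recording the list of edge labels traversed. -/
inductive Path (G : LMDAG β M) : β × ℕ → List (Option (Finset (M × ℕ))) → β × ℕ → Prop where
  | refl (v : β × ℕ) : Path G v [] v
  | step {u : β × ℕ} {l : Option (Finset (M × ℕ))} {v : β × ℕ}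
      {L : List (Option (Finset (M × ℕ)))} {w : β × ℕ} :
      G.edge u l v → Path G v L w → Path G u (l :: L) w

/-- The mapping `μ(π)` of a path, given by its list of labels: the union of the labels
of its marker edges. -/
def mu (L : List (Option (Finset (M × ℕ)))) : Set (M × ℕ) :=
  {p | ∃ S : Finset (M × ℕ), some S ∈ L ∧ p ∈ S}

/-- Requirements of a mapping DAG: initial and final vertices and edge endpoints are
vertices, the graph is acyclic, and on every path the labels of the marker edges are
pairwise disjoint. -/
def IsMappingDAG (G : LMDAG β M) : Prop :=
  G.init ∈ G.verts ∧ G.final ∈ G.verts ∧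
  (∀ u l v, G.edge u l v → u ∈ G.verts ∧ v ∈ G.verts) ∧
  (∀ v L, G.Path v L v → L = []) ∧
  (∀ u L w, G.Path u L w →
    L.Pairwise fun l₁ l₂ => ∀ S₁ S₂ : Finset (M × ℕ),
      l₁ = some S₁ → l₂ = some S₂ → Disjoint S₁ S₂)

/-- Label lists that start with a marker edge, end with an ε-edge, and alternate
between marker edges and ε-edges. -/
inductive Alt : List (Option (Finset (M × ℕ))) → Prop where
  | base (S : Finset (M × ℕ)) : Alt [some S, none]
  | cons (S : Finset (M × ℕ)) {L : List (Option (Finset (M × ℕ)))} :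
      Alt L → Alt (some S :: none :: L)

/-- A mapping DAG is normalized if every path from the initial vertex to the final vertex
starts with a marker edge, ends with an ε-edge, and alternates between marker edges
and ε-edges. -/
def Normalized (G : LMDAG β M) : Prop :=
  ∀ L, G.Path G.init L G.final → Alt L

/-- A mapping DAG is leveled if the initial vertex has level 0, every ε-edge increases
the level by exactly one, every marker edge preserves the level, and every pair `(m, i)`
in the label of a marker edge has `i` equal to the level of its endpoints. -/
def Leveled (G : LMDAG β M) : Prop :=
  G.init.2 = 0 ∧
  (∀ u v, G.edge u none v → v.2 = u.2 + 1) ∧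
  (∀ u S v, G.edge u (some S) v → v.2 = u.2 ∧ ∀ p ∈ S, p.2 = u.2)

/-- A mapping DAG is trimmed if every vertex is accessible from the initial vertex and
co-accessible to the final vertex. -/
def Trimmed (G : LMDAG β M) : Prop :=
  ∀ v ∈ G.verts, (∃ L, G.Path G.init L v) ∧ (∃ L, G.Path v L G.final)

/-- `M(U)`: the set of mappings of paths from a vertex of `U` to the final vertex. -/
def MapSet (G : LMDAG β M) (U : Set (β × ℕ)) : Set (Set (M × ℕ)) :=
  {T | ∃ v ∈ U, ∃ L, G.Path v L G.final ∧ T = mu L}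

/-- A level set: either the singleton of the final vertex, or a non-empty set of vertices
which all have the same level and are each the source of some marker edge. -/
def IsLevelSet (G : LMDAG β M) (Λ : Set (β × ℕ)) : Prop :=
  Λ = {G.final} ∨
  (Λ.Nonempty ∧ (∃ i, ∀ v ∈ Λ, v.2 = i) ∧
    ∀ v ∈ Λ, v ∈ G.verts ∧ ∃ S w, G.edge v (some S) w)

/-- The level of a level set (the common level of its vertices). -/
noncomputable def levelOf (Λ : Set (β × ℕ)) : ℕ := sInf {i | ∃ v ∈ Λ, v.2 = i}

/-- `NextLevel(Λ)`: the pairs `(S, Λ'')` where `S` labels some marker edge starting in `Λ`,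
and `Λ''` is the set of vertices reached from a vertex of `Λ` by a marker edge labeled `S`
followed by an ε-edge. -/
def NextLevel (G : LMDAG β M) (Λ : Set (β × ℕ)) :
    Set (Finset (M × ℕ) × Set (β × ℕ)) :=
  {p | (∃ v ∈ Λ, ∃ v', G.edge v (some p.1) v') ∧
       p.2 = {w | ∃ v ∈ Λ, ∃ v', G.edge v (some p.1) v' ∧ G.edge v' none w}}

/-- A vertex which is the final vertex or has an outgoing edge whose label is neither
ε nor ∅. -/
def GoodVert (G : LMDAG β M) (v : β × ℕ) : Prop :=
  v = G.final ∨ ∃ (S : Finset (M × ℕ)) (w : β × ℕ), G.edge v (some S) w ∧ S ≠ ∅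

/-- Reachability by a directed path. -/
def Reachable (G : LMDAG β M) (u v : β × ℕ) : Prop := ∃ L, G.Path u L v

/-- The jump level `JL(Λ)`: the first level `j ≥ level(Λ)` containing a vertex `v'`
reachable from some vertex of `Λ` such that `v'` is the final vertex or has an outgoing
edge whose label is neither ε nor ∅. -/
noncomputable def JL (G : LMDAG β M) (Λ : Set (β × ℕ)) : ℕ :=
  sInf {j | levelOf Λ ≤ j ∧
    ∃ v', v'.2 = j ∧ G.GoodVert v' ∧ ∃ v ∈ Λ, G.Reachable v v'}

/-- The jump set `Jump(Λ)`: `Λ` itself if `JL(Λ) = level(Λ)`, and otherwise the set of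
vertices at level `JL(Λ)` reachable from some vertex of `Λ` by a directed path whose
last edge is an ε-edge. -/
def JumpSet (G : LMDAG β M) (Λ : Set (β × ℕ)) : Set (β × ℕ) :=
  {w | (G.JL Λ = levelOf Λ ∧ w ∈ Λ) ∨
       (G.JL Λ ≠ levelOf Λ ∧ w.2 = G.JL Λ ∧
         ∃ v ∈ Λ, ∃ L v', G.Path v L v' ∧ G.edge v' none w)}

/-- `Reach(i, j)` relates a vertex `u` of level `i` to a vertex `v` of level `j` when
there is a path from `u` to `v` traversing only ε-edges and marker edges labeled ∅,
whose last edge is an ε-edge. -/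
def ReachRel (G : LMDAG β M) (i j : ℕ) (u v : β × ℕ) : Prop :=
  u ∈ G.verts ∧ v ∈ G.verts ∧ u.2 = i ∧ v.2 = j ∧
  ∃ L, G.Path u L v ∧ (∀ l ∈ L, l = none ∨ l = some (∅ : Finset (M × ℕ))) ∧
    L.getLast? = some none

/-- Paths as data: `IsPathL G u steps w` holds when `steps` is the list of
(label, target vertex) pairs of the successive edges of a path from `u` to `w`. -/
def IsPathL (G : LMDAG β M) : β × ℕ → List (Option (Finset (M × ℕ)) × (β × ℕ)) → β × ℕ → Prop
  | u, [], w => u = w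
  | u, e :: rest, w => G.edge u e.1 e.2 ∧ G.IsPathL e.2 rest w

/-- An `S`-path: a path with no ε-edge whose labels are exactly the elements of `S`,
each occurring exactly once. -/
def ExactPath [DecidableEq M] (G : LMDAG β M) (S : Set (Finset (M × ℕ)))
    (u v : β × ℕ) : Prop :=
  ∃ L, G.Path u L v ∧ (∀ l ∈ L, ∃ s ∈ S, l = some s) ∧
    ∀ s ∈ S, List.count (some s) L = 1

/-- An `S⁺/S⁻`-path: a path with no ε-edge and no edge labeled by an element of `S⁻`,
on which every label of `S⁺` occurs exactly once. -/
def PMPath [DecidableEq M] (G : LMDAG β M) (Sp Sm : Set (Finset (M × ℕ)))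
    (u v : β × ℕ) : Prop :=
  ∃ L, G.Path u L v ∧ (∀ l ∈ L, l ≠ none ∧ ∀ s ∈ Sm, l ≠ some s) ∧
    ∀ s ∈ Sp, List.count (some s) L = 1

end LMDAG

/-- An extended VA: letter transitions and ev-transitions reading a (possibly empty)
finite set of variable markers; states are partitioned via `evState` into ev-states
and letter-states. -/
structure EVA (Sig V Q : Type) : Type where
  init : Q
  final : Set Q
  evState : Q → Prop
  letterTr : Q → Sig → Q → Prop
  evTr : Q → Finset (Marker V) → Q → Prop

namespace EVA

/-- The data of a run of an extended VA on a document of length `n`: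
states `qs i`, `qs' i` and marker sets `Ms i` for `0 ≤ i ≤ n`. -/
structure RunData (Q V : Type) (n : ℕ) : Type where
  qs : Fin (n + 1) → Q
  qs' : Fin (n + 1) → Q
  Ms : Fin (n + 1) → Finset (Marker V)

variable {Sig V Q : Type}

/-- Wellformedness of the partition into ev-states and letter-states: ev-transitions go
from ev-states to letter-states, letter transitions from letter-states to ev-states,
the initial state is an ev-state, and all final states are letter-states. -/
def WF (A : EVA Sig V Q) : Prop :=
  (∀ q M q', A.evTr q M q' → A.evState q ∧ ¬ A.evState q') ∧
  (∀ q a q', A.letterTr q a q' → ¬ A.evState q ∧ A.evState q') ∧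
  A.evState A.init ∧ ∀ q ∈ A.final, ¬ A.evState q

/-- `r` is an accepting run of `A` on `d`:
`(q₀,0) →^{M₀} (q₀',0) →^{d₀} (q₁,1) →^{M₁} ⋯ →^{d_{n-1}} (q_n,n) →^{M_n} (q_n',n)`
with `q₀` the initial state and `q_n'` final. -/
def IsAccRun (A : EVA Sig V Q) (d : List Sig) (r : RunData Q V d.length) : Prop :=
  r.qs 0 = A.init ∧
  (∀ i, A.evTr (r.qs i) (r.Ms i) (r.qs' i)) ∧
  (∀ i : Fin d.length, A.letterTr (r.qs' i.castSucc) (d.get i) (r.qs i.succ)) ∧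
  r.qs' (Fin.last d.length) ∈ A.final

/-- The set of (marker, position) pairs read by a run. -/
def readSet {n : ℕ} (r : RunData Q V n) : Set (Marker V × ℕ) :=
  {p | ∃ i : Fin (n + 1), (i : ℕ) = p.2 ∧ p.1 ∈ r.Ms i}

/-- A valid run: an accepting run where every marker is read at most once and every open
marker read at position `i` is matched by the close marker read at some `i' ≥ i`. -/
def IsValidRun (A : EVA Sig V Q) (d : List Sig) (r : RunData Q V d.length) : Prop :=
  A.IsAccRun d r ∧
  (∀ (m : Marker V) (i j : Fin (d.length + 1)), m ∈ r.Ms i → m ∈ r.Ms j → i = j) ∧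
  (∀ (x : V) (i : Fin (d.length + 1)), Marker.openM x ∈ r.Ms i →
      ∃ j : Fin (d.length + 1), (i : ℕ) ≤ (j : ℕ) ∧ Marker.closeM x ∈ r.Ms j)

/-- An extended VA is sequential when every accepting run on every document is valid. -/
def Sequential (A : EVA Sig V Q) : Prop :=
  ∀ (d : List Sig) (r : RunData Q V d.length), A.IsAccRun d r → A.IsValidRun d r

/-- The mappings of an extended VA on a document, each written as the set of pairs
`(m, i)` of a marker `m` read at position `i` in a valid run. -/
def mappings (A : EVA Sig V Q) (d : List Sig) : Set (Set (Marker V × ℕ)) :=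
  {T | ∃ r : RunData Q V d.length, A.IsValidRun d r ∧ T = readSet r}

/-- The product DAG of an extended VA `A` and a document `d`: vertices
`Q × {0,…,n} ∪ {v_f}` (with `v_f = (none, n+1)` fresh), ε-edges for letter transitions
matching the document, marker edges labeled `{(m, i) | m ∈ M}` for ev-transitions at
each position `i`, and final ε-edges from `(q, n)`, `q` final, to `v_f`. -/
def productDAG [DecidableEq V] (A : EVA Sig V Q) (d : List Sig) :
    LMDAG (Option Q) (Marker V) where
  verts := {v | (∃ q : Q, v.1 = some q ∧ v.2 ≤ d.length) ∨ v = (none, d.length + 1)}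
  init := (some A.init, 0)
  final := (none, d.length + 1)
  edge := fun u l v =>
    (∃ (q : Q) (a : Sig) (q' : Q) (i : ℕ), A.letterTr q a q' ∧ d[i]? = some a ∧
        u = (some q, i) ∧ v = (some q', i + 1) ∧ l = none) ∨
    (∃ (q : Q) (Mset : Finset (Marker V)) (q' : Q) (i : ℕ),
        A.evTr q Mset q' ∧ i ≤ d.length ∧
        u = (some q, i) ∧ v = (some q', i) ∧ l = some (Mset.image fun m => (m, i))) ∨
    (∃ q : Q, q ∈ A.final ∧ u = (some q, d.length) ∧ v = (none, d.length + 1) ∧ l = none)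

end EVA

namespace VA

variable {Sig V Q : Type}

/-- The product DAG of a (non-extended) VA `A` and a document `d`: vertices
`Q × {0,…,n} ∪ {v_f}` (with `v_f = (none, n+1)` fresh), ε-edges for letter transitions
matching the document, marker edges labeled `{(m, i)}` for variable transitions at each
position `i`, and final ε-edges from `(q, n)`, `q` final, to `v_f`. -/
def productDAG (A : VA Sig V Q) (d : List Sig) : LMDAG (Option Q) (Marker V) where
  verts := {v | (∃ q : Q, v.1 = some q ∧ v.2 ≤ d.length) ∨ v = (none, d.length + 1)}
  init := (some A.init, 0)
  final := (none, d.length + 1)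
  edge := fun u l v =>
    (∃ (q : Q) (a : Sig) (q' : Q) (i : ℕ), A.letterTr q a q' ∧ d[i]? = some a ∧
        u = (some q, i) ∧ v = (some q', i + 1) ∧ l = none) ∨
    (∃ (q : Q) (m : Marker V) (q' : Q) (i : ℕ), A.varTr q m q' ∧ i ≤ d.length ∧
        u = (some q, i) ∧ v = (some q', i) ∧ l = some {(m, i)}) ∨
    (∃ q : Q, q ∈ A.final ∧ u = (some q, d.length) ∧ v = (none, d.length + 1) ∧ l = none)

end VA

namespace Aux

variable {Sig V Q : Type}

/-- A run made only of variable transitions, recorded as a list of markers. -/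
inductive VarRun (A : VA Sig V Q) : Q → List (Marker V) → Q → Prop where
  | refl (q : Q) : VarRun A q [] q
  | step {q : Q} {m : Marker V} {q' q'' : Q} {ms : List (Marker V)} :
      A.varTr q m q' → VarRun A q' ms q'' → VarRun A q (m :: ms) q''

lemma VarRun.append {A : VA Sig V Q} {q q' q'' : Q} {ms ms' : List (Marker V)}
    (h : VarRun A q ms q') (h' : VarRun A q' ms' q'') :
    VarRun A q (ms ++ ms') q'' := by
  induction h with
  | refl => simpa
  | step ht _ ih => exact VarRun.step ht (ih h')

lemma varRun_toRun {A : VA Sig V Q} {q q' : Q} {ms : List (Marker V)}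
    (h : VarRun A q ms q') (d : List Sig) (i : ℕ) :
    A.Run d (q, i) (ms.map fun m => (m, i)) (q', i) := by
  induction h with
  | refl => exact VA.Run.refl _
  | step ht _ ih => exact VA.Run.stepVar ht ih

lemma run_append {A : VA Sig V Q} {d : List Sig} {c1 c2 c3 : Q × ℕ}
    {L1 L2 : List (Marker V × ℕ)} (h1 : A.Run d c1 L1 c2) (h2 : A.Run d c2 L2 c3) :
    A.Run d c1 (L1 ++ L2) c3 := by
  induction h1 with
  | refl => simpa
  | stepLetter ht hd _ ih => exact VA.Run.stepLetter ht hd (ih h2)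
  | stepVar ht _ ih => exact VA.Run.stepVar ht (ih h2)

lemma run_le' {A : VA Sig V Q} {d : List Sig} {c c' : Q × ℕ} {L : List (Marker V × ℕ)}
    (h : A.Run d c L c') : c.2 ≤ c'.2 := by
  induction h with
  | refl => exact le_refl _
  | stepLetter ht hd h ih => exact le_trans (by omega) ih
  | stepVar ht h ih => exact ih

lemma run_pos {A : VA Sig V Q} {d : List Sig} {c c' : Q × ℕ} {L : List (Marker V × ℕ)}
    (h : A.Run d c L c') : c'.2 = c.2 ∨ c'.2 ≤ d.length := by
  induction h with
  | refl => exact Or.inl rfl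
  | @stepLetter q i a q' L c hlt hd h ih =>
      rcases ih with h0 | h0
      · right
        have : i < d.length := by
          by_contra hc
          rw [List.getElem?_eq_none (by omega)] at hd
          simp at hd
        omega
      · exact Or.inr h0
  | stepVar ht h ih => exact ih

lemma run_shift {A : VA Sig V Q} {d : List Sig} {c c' : Q × ℕ} {L : List (Marker V × ℕ)}
    (h : A.Run d c L c') :
    ∀ (e : List Sig) (i' : ℕ), (∀ k, c.2 + k < c'.2 → d[c.2 + k]? = e[i' + k]?) →
    ∃ L', A.Run e (c.1, i') L' (c'.1, i' + (c'.2 - c.2)) := by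
  induction h with
  | refl c =>
      intro e i' _
      exact ⟨[], by simpa using VA.Run.refl (c.1, i')⟩
  | @stepLetter q i a q' L c hlt hd h ih =>
      intro e i' hagree
      have hij : i + 1 ≤ c.2 := run_le' h
      obtain ⟨L', hL'⟩ := ih e (i' + 1) (fun k hk => by
        have := hagree (k + 1) (by omega)
        simpa [Nat.add_assoc, Nat.add_comm 1 k] using this)
      have harith : (i' + 1) + (c.2 - (i + 1)) = i' + (c.2 - i) := by omega
      rw [harith] at hL'
      have he : e[i']? = some a := by
        have := hagree 0 (by omega)
        simpa using this.symm.trans hd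
      exact ⟨L', VA.Run.stepLetter hlt he hL'⟩
  | @stepVar q i m q' L c hvt h ih =>
      intro e i' hagree
      obtain ⟨L', hL'⟩ := ih e i' hagree
      exact ⟨(m, i') :: L', VA.Run.stepVar hvt hL'⟩

/-- Key: a variable-only run cannot read the same marker at two distinct positions
in its list, when the automaton is sequential and trimmed. -/
lemma getElem_mid {α : Type} (P X S : List α) (a : ℕ) (ha : a < X.length)
    {h : P.length + a < (P ++ (X ++ S)).length} :
    (P ++ (X ++ S))[P.length + a]'h = X[a]'ha := by
  rw [List.getElem_append_right (Nat.le_add_right _ _)]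
  simp only [Nat.add_sub_cancel_left]
  rw [List.getElem_append_left ha]

lemma varRun_dup {A : VA Sig V Q} (hseq : A.Sequential) (htrim : A.Trimmed)
    {q q' : Q} {ms : List (Marker V)} (h : VarRun A q ms q')
    {a b : ℕ} (ha : a < ms.length) (hb : b < ms.length) (hne : a ≠ b)
    (heq : ms[a] = ms[b]) : False := by
  obtain ⟨d₁, i₁, L₁, _L, qf₁, _, hL₁, _⟩ := htrim q
  obtain ⟨d₂, i₂, _L', L₂, qf, hqf, _, hL₂⟩ := htrim q'
  have hi₁d : i₁ ≤ d₁.length := by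
    rcases run_pos hL₁ with h0 | h0
    · simp only at h0; omega
    · exact h0
  have hi₂d : i₂ ≤ d₂.length := run_le' hL₂
  set e := d₁.take i₁ ++ d₂.drop i₂ with he
  have hlen_take : (d₁.take i₁).length = i₁ := by simp [hi₁d]
  obtain ⟨L₁e, hL₁e0⟩ := run_shift hL₁ e 0 (fun k hk => by
    show d₁[0 + k]? = e[0 + k]?
    simp only [Nat.zero_add]
    simp only at hk
    rw [he, List.getElem?_append_left (by omega), List.getElem?_take_of_lt (by omega)]
    )
  have hL₁e : A.Run e (A.init, 0) L₁e (q, i₁) := by simpa using hL₁e0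
  obtain ⟨L₂e, hL₂e0⟩ := run_shift hL₂ e i₁ (fun k hk => by
    show d₂[i₂ + k]? = e[i₁ + k]?
    simp only at hk
    rw [he, List.getElem?_append_right (by omega), hlen_take, Nat.add_sub_cancel_left,
      List.getElem?_drop])
  have hL₂e : A.Run e (q', i₁) L₂e (qf, i₁ + (d₂.length - i₂)) := by simpa using hL₂e0
  have hT := varRun_toRun h e i₁
  set T : List (Marker V × ℕ) := ms.map fun m => (m, i₁) with hTdef
  have hfull : A.Run e (A.init, 0) (L₁e ++ (T ++ L₂e)) (qf, e.length) := by
    have hlen : e.length = i₁ + (d₂.length - i₂) := by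
      simp [he, hlen_take]
    rw [hlen]
    exact run_append hL₁e (run_append hT hL₂e)
  have hval := hseq e (L₁e ++ (T ++ L₂e)) ⟨qf, hqf, hfull⟩
  have hTlen : T.length = ms.length := by simp [hTdef]
  have hka : L₁e.length + a < (L₁e ++ (T ++ L₂e)).length := by
    simp only [List.length_append, hTlen]; omega
  have hkb : L₁e.length + b < (L₁e ++ (T ++ L₂e)).length := by
    simp only [List.length_append, hTlen]; omega
  have hga : ((L₁e ++ (T ++ L₂e)).get ⟨L₁e.length + a, hka⟩).1 = ms[a] := by
    rw [List.get_eq_getElem, getElem_mid _ _ _ a (by omega)]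
    simp [hTdef]
  have hgb : ((L₁e ++ (T ++ L₂e)).get ⟨L₁e.length + b, hkb⟩).1 = ms[a] := by
    rw [List.get_eq_getElem, getElem_mid _ _ _ b (by omega)]
    simp [hTdef, heq]
  have := hval.1 ms[a] _ _ hka hkb hga hgb
  omega

lemma edge_cases {A : VA Sig V Q} {d : List Sig} {u v : Option Q × ℕ}
    {l : Option (Finset (Marker V × ℕ))} (h : (A.productDAG d).edge u l v) :
    (l = none ∧ v.2 = u.2 + 1) ∨
    (∃ q m q', A.varTr q m q' ∧ u.2 ≤ d.length ∧ u = (some q, u.2) ∧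
      v = (some q', u.2) ∧ l = some ({(m, u.2)} : Finset (Marker V × ℕ))) := by
  rcases h with ⟨q, a, q', i, ht, hd, hu, hv, hl⟩ | ⟨q, m, q', i, ht, hi, hu, hv, hl⟩ |
    ⟨q, hq, hu, hv, hl⟩
  · left; subst hu hv hl; simp
  · right
    have hu2 : u.2 = i := by rw [hu]
    subst hu2
    exact ⟨q, m, q', ht, hi, hu, hv, hl⟩
  · left; subst hu hv hl; simp

lemma edge_mono {A : VA Sig V Q} {d : List Sig} {u v : Option Q × ℕ}
    {l : Option (Finset (Marker V × ℕ))} (h : (A.productDAG d).edge u l v) :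
    u.2 ≤ v.2 := by
  rcases edge_cases h with ⟨_, h2⟩ | ⟨_, _, _, _, _, _, hv, _⟩
  · omega
  · rw [hv]

lemma path_mono {A : VA Sig V Q} {d : List Sig} {u v : Option Q × ℕ}
    {L : List (Option (Finset (Marker V × ℕ)))}
    (h : (A.productDAG d).Path u L v) : u.2 ≤ v.2 := by
  induction h with
  | refl => exact le_refl _
  | step he _ ih => exact le_trans (edge_mono he) ih

lemma path_level {A : VA Sig V Q} {d : List Sig} {u v : Option Q × ℕ}
    {L : List (Option (Finset (Marker V × ℕ)))}
    (hp : (A.productDAG d).Path u L v) : v.2 = u.2 →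
    ∀ q, u.1 = some q → ∃ q' ms, v.1 = some q' ∧ VarRun A q ms q' ∧
      L = ms.map fun m => some ({(m, u.2)} : Finset (Marker V × ℕ)) := by
  induction hp with
  | refl v => intro _ q hq; exact ⟨q, [], hq, VarRun.refl q, rfl⟩
  | @step u l w L v he hp ih =>
      intro hv q hq
      rcases edge_cases he with ⟨_, hw⟩ | ⟨q₀, m, q₁, ht, _, hu, hw, hl⟩
      · have := path_mono hp; omega
      · have hq₀ : q₀ = q := by
          rw [hu] at hq; exact (Option.some.inj hq)
        have hw2 : w.2 = u.2 := by rw [hw]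
        obtain ⟨q', ms, hv1, hvr, hL⟩ := ih (by omega) q₁ (by rw [hw])
        subst hq₀
        exact ⟨q', m :: ms, hv1, VarRun.step ht hvr, by simp [hL, hl, hw2]⟩

lemma path_mem {β M : Type} {G : LMDAG β M} {v w : β × ℕ}
    {L : List (Option (Finset (M × ℕ)))} {l' : Option (Finset (M × ℕ))}
    (hp : G.Path v L w) (hmem : l' ∈ L) :
    ∃ L_a x y, G.Path v L_a x ∧ G.edge x l' y := by
  induction hp with
  | refl => simp at hmem
  | @step u l v' L' w he hp ih =>
      rcases List.mem_cons.mp hmem with rfl | hmem'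
      · exact ⟨[], u, v', LMDAG.Path.refl u, he⟩
      · obtain ⟨L_a, x, y, hpa, hxy⟩ := ih hmem'
        exact ⟨l :: L_a, x, y, LMDAG.Path.step he hpa, hxy⟩

end Aux

open Aux

open LMDAG in
theorem stmt14 {Sig V Q : Type} [Fintype Q] (A : VA Sig V Q)
    (hseq : A.Sequential) (htrim : A.Trimmed) (d : List Sig) :
    (A.productDAG d).IsMappingDAG ∧ (A.productDAG d).Leveled ∧
    ∀ i : ℕ, {v ∈ (A.productDAG d).verts | v.2 = i}.ncard ≤ Fintype.card Q := by
  refine ⟨⟨Or.inl ⟨A.init, rfl, Nat.zero_le _⟩, Or.inr rfl, ?edges, ?acyc, ?disj⟩,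
    ⟨rfl, ?eps, ?mark⟩, ?width⟩
  case edges =>
    intro u l v h
    rcases h with ⟨q, a, q', i, ht, hd, rfl, rfl, rfl⟩ |
      ⟨q, m, q', i, ht, hi, rfl, rfl, rfl⟩ | ⟨q, hq, rfl, rfl, rfl⟩
    · have hi : i < d.length := by
        by_contra hc
        rw [List.getElem?_eq_none (by omega)] at hd
        simp at hd
      exact ⟨Or.inl ⟨q, rfl, by omega⟩, Or.inl ⟨q', rfl, by omega⟩⟩
    · exact ⟨Or.inl ⟨q, rfl, hi⟩, Or.inl ⟨q', rfl, hi⟩⟩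
    · exact ⟨Or.inl ⟨q, rfl, le_refl _⟩, Or.inr rfl⟩
  case acyc =>
    intro v L hp
    cases hp with
    | refl => rfl
    | @step _ l w L' _ he hp' =>
      exfalso
      have hmono := path_mono hp'
      rcases edge_cases he with ⟨_, hw2⟩ | ⟨q, m, q', ht, _, hu, hw, hl⟩
      · omega
      · obtain ⟨q'', ms, hv1, hvr, hL⟩ :=
          path_level (LMDAG.Path.step he hp') rfl q (by rw [hu])
        have hq'' : q'' = q := by
          rw [hu] at hv1; exact (Option.some.inj hv1).symm
        subst hq''
        have hms : ms ≠ [] := by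
          intro h0; rw [h0] at hL; simp at hL
        have hlen : 0 < ms.length := List.length_pos_iff.mpr hms
        have hdup := VarRun.append hvr hvr
        refine varRun_dup hseq htrim hdup (a := 0) (b := ms.length)
          (by simp; omega) (by simp; omega) (by omega) ?_
        rw [List.getElem_append_left hlen, List.getElem_append_right (le_refl _)]
        simp
  case disj =>
    intro u L w hp
    induction hp with
    | refl => exact List.Pairwise.nil
    | @step u l v L' w he hp' ih =>
      refine List.Pairwise.cons ?_ ih
      intro l' hl' S₁ S₂ hS₁ hS₂
      by_contra hdis
      rcases edge_cases he with ⟨h0, _⟩ | ⟨q, m, q', ht, _, hu, hv, hl⟩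
      · rw [h0] at hS₁; simp at hS₁
      obtain ⟨L_a, x, y, hpa, hxy⟩ := path_mem hp' hl'
      rcases edge_cases hxy with ⟨h0, _⟩ | ⟨q₂, m₂, q₃, ht₂, _, hx, hy, hl'₂⟩
      · rw [h0] at hS₂; simp at hS₂
      have hS₁' : S₁ = {(m, u.2)} := by
        rw [hl] at hS₁; exact (Option.some.inj hS₁).symm
      have hS₂' : S₂ = {(m₂, x.2)} := by
        rw [hl'₂] at hS₂; exact (Option.some.inj hS₂).symm
      obtain ⟨p, hp₁, hp₂⟩ := Finset.not_disjoint_iff.mp hdis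
      rw [hS₁', Finset.mem_singleton] at hp₁
      rw [hS₂', Finset.mem_singleton] at hp₂
      have hpm : m₂ = m ∧ x.2 = u.2 := by
        rw [hp₁] at hp₂
        exact ⟨(Prod.mk.injEq _ _ _ _ ▸ hp₂).1.symm, ((Prod.mk.injEq _ _ _ _ ▸ hp₂).2).symm⟩
      obtain ⟨hm₂, hx2⟩ := hpm
      have hv2 : v.2 = u.2 := by rw [hv]
      obtain ⟨q₂', ms, hx1, hvr, _⟩ := path_level hpa (by omega) q' (by rw [hv])
      have hq₂ : q₂' = q₂ := by
        rw [hx] at hx1; exact (Option.some.inj hx1).symm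
      subst hq₂
      rw [hm₂] at ht₂
      have hvr2 : VarRun A q (m :: (ms ++ [m])) q₃ :=
        VarRun.step ht (VarRun.append hvr (VarRun.step ht₂ (VarRun.refl q₃)))
      refine varRun_dup hseq htrim hvr2 (a := 0) (b := ms.length + 1)
        (by simp) (by simp) (by omega) ?_
      simp
  case eps =>
    intro u v h
    rcases edge_cases h with ⟨_, h2⟩ | ⟨q, m, q', _, _, _, _, hl⟩
    · exact h2
    · simp at hl
  case mark =>
    intro u S v h
    rcases edge_cases h with ⟨h0, _⟩ | ⟨q, m, q', _, _, _, hv, hl⟩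
    · simp at h0
    · have hS : S = {(m, u.2)} := Option.some.inj hl
      refine ⟨by rw [hv], ?_⟩
      intro p hp
      rw [hS, Finset.mem_singleton] at hp
      rw [hp]
  case width =>
    intro i
    have hQ : 1 ≤ Fintype.card Q := Fintype.card_pos_iff.mpr ⟨A.init⟩
    rcases eq_or_ne i (d.length + 1) with rfl | hne
    · have hsub : {v ∈ (A.productDAG d).verts | v.2 = d.length + 1} ⊆
          {((none : Option Q), d.length + 1)} := by
        rintro ⟨o, j⟩ ⟨hv, hj⟩
        rcases hv with ⟨q, h1, h2⟩ | h3
        · simp only at hj h2; omega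
        · simpa using h3
      calc {v ∈ (A.productDAG d).verts | v.2 = d.length + 1}.ncard
          ≤ ({((none : Option Q), d.length + 1)} : Set (Option Q × ℕ)).ncard :=
            Set.ncard_le_ncard hsub (Set.finite_singleton _)
        _ = 1 := Set.ncard_singleton _
        _ ≤ _ := hQ
    · have hsub : {v ∈ (A.productDAG d).verts | v.2 = i} ⊆
          Set.range (fun q : Q => ((some q : Option Q), i)) := by
        rintro ⟨o, j⟩ ⟨hv, hj⟩
        rcases hv with ⟨q, h1, h2⟩ | h3
        · simp only at hj h1 ⊢
          exact ⟨q, by rw [h1, hj]⟩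
        · exfalso
          apply hne
          simp only at hj
          have : j = d.length + 1 := congrArg Prod.snd h3
          omega
      have hinj : Function.Injective (fun q : Q => ((some q : Option Q), i)) := by
        intro a b hab
        simpa using hab
      calc {v ∈ (A.productDAG d).verts | v.2 = i}.ncard
          ≤ (Set.range (fun q : Q => ((some q : Option Q), i))).ncard :=
            Set.ncard_le_ncard hsub (Set.finite_range _)
        _ = (Set.univ : Set Q).ncard := by
            rw [← Set.image_univ, Set.ncard_image_of_injective _ hinj]
        _ = Fintype.card Q := by
            rw [Set.ncard_univ, Nat.card_eq_fintype_card]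

end Spanners
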